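/- Sticky face lemma: let P be a polyhedron in ℝ^n, c_0 ∈ ℝ^n, and let F be the set of maximizers of x ↦ c_0·x over P (assumed nonempty). Then there exists ε > 0 such that for every c with ‖c − c_0‖ < ε, the set of maximizers of x ↦ c·x over P equals the set of maximizers of x ↦ c·x over F. -/

import Mathlib

open scoped RealInnerProductSpace
open Metric Filter

section Helpers

variable {E : Type*} [NormedAddCommGroup E] [InnerProductSpace ℝ E]

/-- a positive step size keeping finitely many affine constraints nonpositive -/
lemma exists_pos_step {k : ℕ} (α β : Fin k → ℝ) (hα : ∀ i, α i ≤ 0)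
    (h : ∀ i, α i = 0 → β i ≤ 0) : ∃ t > 0, ∀ i, α i + t * β i ≤ 0 := by
  classical
  set s : Finset ℝ :=
    insert 1 (Finset.univ.image fun i => if 0 < β i then (-α i)/(β i) else 1) with hs
  have hne : s.Nonempty := ⟨1, Finset.mem_insert_self _ _⟩
  refine ⟨s.min' hne, ?_, ?_⟩
  · rw [gt_iff_lt, Finset.lt_min'_iff]
    intro y hy
    rw [hs, Finset.mem_insert] at hy
    rcases hy with rfl | hy
    · norm_num
    · obtain ⟨i, -, rfl⟩ := Finset.mem_image.mp hy
      split_ifs with hb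
      · have hα' : α i < 0 := by
          rcases lt_or_eq_of_le (hα i) with h' | h'
          · exact h'
          · exact absurd (h i h') (not_le.mpr hb)
        exact div_pos (by linarith) hb
      · norm_num
  · intro i
    by_cases hb : 0 < β i
    · have hmem : (-α i)/(β i) ∈ s := by
        rw [hs]
        exact Finset.mem_insert_of_mem (Finset.mem_image.mpr ⟨i, Finset.mem_univ _, if_pos hb⟩)
      have := Finset.min'_le s _ hmem
      have h2 : s.min' hne * β i ≤ -α i := by
        rw [← le_div_iff₀ hb]; exact this
      linarith
    · push_neg at hb
      have h1 : 0 < s.min' hne := by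
        rw [Finset.lt_min'_iff]
        intro y hy
        rw [hs, Finset.mem_insert] at hy
        rcases hy with rfl | hy
        · norm_num
        · obtain ⟨j, -, rfl⟩ := Finset.mem_image.mp hy
          split_ifs with hb'
          · have : α j < 0 := by
              rcases lt_or_eq_of_le (hα j) with h' | h'
              · exact h'
              · exact absurd (h j h') (not_le.mpr hb')
            exact div_pos (by linarith) hb'
          · norm_num
      nlinarith [hα i]

lemma le_infDist' {S : Set E} (hne : S.Nonempty) {x : E} {b : ℝ}
    (h : ∀ y ∈ S, b ≤ dist x y) : b ≤ infDist x S := by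
  by_contra hc
  push_neg at hc
  obtain ⟨y, hy, hlt⟩ := (infDist_lt_iff hne).mp hc
  exact absurd (h y hy) (not_le.mpr hlt)

lemma infDist_smul_le {S : Set E} (hS : ∀ w ∈ S, ∀ r : ℝ, 0 < r → r • w ∈ S)
    (hne : S.Nonempty) {r : ℝ} (hr : 0 < r) (v : E) :
    r * infDist v S ≤ infDist (r • v) S := by
  apply le_infDist' hne
  intro w hw
  have hmem : r⁻¹ • w ∈ S := hS w hw r⁻¹ (by positivity)
  have hdist : dist (r • v) w = r * dist v (r⁻¹ • w) := by
    rw [dist_eq_norm, dist_eq_norm]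
    rw [show v - r⁻¹ • w = r⁻¹ • (r • v - w) by
      rw [smul_sub, inv_smul_smul₀ hr.ne']]
    rw [norm_smul, Real.norm_eq_abs, abs_of_pos (by positivity : (0:ℝ) < r⁻¹)]
    field_simp
  rw [hdist]
  exact mul_le_mul_of_nonneg_left (infDist_le_dist_of_mem hmem) hr.le

lemma infDist_smul_cone {S : Set E} (hS : ∀ w ∈ S, ∀ r : ℝ, 0 < r → r • w ∈ S)
    (hne : S.Nonempty) {r : ℝ} (hr : 0 < r) (v : E) :
    infDist (r • v) S = r * infDist v S := by
  refine le_antisymm ?_ (infDist_smul_le hS hne hr v)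
  have h2 := infDist_smul_le hS hne (r := r⁻¹) (by positivity) (r • v)
  rw [inv_smul_smul₀ hr.ne'] at h2
  calc infDist (r • v) S = r * (r⁻¹ * infDist (r • v) S) := by field_simp
  _ ≤ r * infDist v S := mul_le_mul_of_nonneg_left h2 hr.le

end Helpers

section CoreLemma

variable {E : Type*} [NormedAddCommGroup E] [InnerProductSpace ℝ E] [FiniteDimensional ℝ E]

lemma isClosed_coneSet {k : ℕ} (a : Fin k → E) (c₀ : E) :
    IsClosed {w : E | (∀ i, ⟪a i, w⟫ ≤ 0) ∧ ⟪c₀, w⟫ = 0} := by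
  rw [Set.setOf_and]
  refine IsClosed.inter ?_ (isClosed_eq (continuous_const.inner continuous_id) continuous_const)
  have : {w : E | ∀ i, ⟪a i, w⟫ ≤ 0} = ⋂ i, {w : E | ⟪a i, w⟫ ≤ 0} := by
    ext w; simp
  rw [this]
  exact isClosed_iInter fun i =>
    isClosed_le (continuous_const.inner continuous_id) continuous_const

theorem hoffman_core (k : ℕ) :
    ∀ (a : Fin k → E) (c₀ : E),
      (∀ v : E, (∀ i, ⟪a i, v⟫ ≤ 0) → ⟪c₀, v⟫ ≤ 0) →
      ∃ L > (0:ℝ), ∀ v : E, (∀ i, ⟪a i, v⟫ ≤ 0) →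
        infDist v {w : E | (∀ i, ⟪a i, w⟫ ≤ 0) ∧ ⟪c₀, w⟫ = 0} ≤ L * (-⟪c₀, v⟫) := by
  induction k using Nat.strong_induction_on with
  | _ k IH =>
  intro a c₀ hyp
  classical
  set S : Set E := {w : E | (∀ i, ⟪a i, w⟫ ≤ 0) ∧ ⟪c₀, w⟫ = 0} with hSdef
  have hScone : ∀ w ∈ S, ∀ r : ℝ, 0 < r → r • w ∈ S := by
    intro w hw r hr
    refine ⟨fun i => ?_, ?_⟩
    · rw [real_inner_smul_right]
      exact mul_nonpos_of_nonneg_of_nonpos hr.le (hw.1 i)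
    · rw [real_inner_smul_right, hw.2, mul_zero]
  have hS0 : (0:E) ∈ S := ⟨fun i => by simp, by simp⟩
  have hSne : S.Nonempty := ⟨0, hS0⟩
  by_contra hcon
  push_neg at hcon
  set W : Submodule ℝ E := Submodule.span ℝ (Set.range a ∪ {c₀}) with hWdef
  have haW : ∀ i, a i ∈ W := fun i => Submodule.subset_span (Or.inl ⟨i, rfl⟩)
  have hcW : c₀ ∈ W := Submodule.subset_span (Or.inr rfl)
  have hbad : ∀ j : ℕ, ∃ v : E, (∀ i, ⟪a i, v⟫ ≤ 0) ∧ v ∈ W ∧ ‖v‖ = 1 ∧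
      0 < -⟪c₀, v⟫ ∧ ((j:ℝ)+1) * (-⟪c₀, v⟫) < infDist v S := by
    intro j
    obtain ⟨v, hvT, hvbad⟩ := hcon ((j:ℝ)+1) (by positivity)
    have hg0 : 0 ≤ -⟪c₀, v⟫ := by have := hyp v hvT; linarith
    have hgpos : 0 < -⟪c₀, v⟫ := by
      rcases lt_or_eq_of_le hg0 with h' | h'
      · exact h'
      · exfalso
        have hvS : v ∈ S := ⟨hvT, by linarith⟩
        rw [infDist_zero_of_mem hvS] at hvbad
        nlinarith
    set u : E := (W.orthogonalProjectionOnto v : E) with hu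
    have hperp : v - u ∈ Wᗮ := W.sub_starProjection_mem_orthogonal v
    have hinner : ∀ x ∈ W, ⟪x, u⟫ = ⟪x, v⟫ := by
      intro x hx
      have h0 : ⟪x, v - u⟫ = 0 := (Submodule.mem_orthogonal W (v - u)).mp hperp x hx
      rw [inner_sub_right] at h0
      linarith
    have huT : ∀ i, ⟪a i, u⟫ ≤ 0 := fun i => by rw [hinner _ (haW i)]; exact hvT i
    have hgu : ⟪c₀, u⟫ = ⟪c₀, v⟫ := hinner _ hcW
    have hdist : infDist v S ≤ infDist u S := by
      apply le_infDist' hSne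
      intro w hw
      have hwS : w + (v - u) ∈ S := by
        refine ⟨fun i => ?_, ?_⟩
        · rw [inner_add_right, (Submodule.mem_orthogonal W (v-u)).mp hperp _ (haW i), add_zero]
          exact hw.1 i
        · rw [inner_add_right, (Submodule.mem_orthogonal W (v-u)).mp hperp _ hcW, add_zero]
          exact hw.2
      calc infDist v S ≤ dist v (w + (v - u)) := infDist_le_dist_of_mem hwS
      _ = dist u w := by rw [dist_eq_norm, dist_eq_norm]; congr 1; abel
    have hune : u ≠ 0 := by
      intro h0
      rw [h0, inner_zero_right] at hgu
      rw [← hgu] at hgpos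
      simp at hgpos
    have hνpos : 0 < ‖u‖ := norm_pos_iff.mpr hune
    refine ⟨‖u‖⁻¹ • u, fun i => ?_, Submodule.smul_mem _ _ (by rw [hu]; exact (W.orthogonalProjectionOnto v).2), ?_, ?_, ?_⟩
    · rw [real_inner_smul_right]
      exact mul_nonpos_of_nonneg_of_nonpos (by positivity) (huT i)
    · rw [norm_smul, Real.norm_eq_abs, abs_of_pos (by positivity : (0:ℝ) < ‖u‖⁻¹)]
      field_simp
    · rw [real_inner_smul_right, hgu]
      have : 0 < ‖u‖⁻¹ := by positivity
      nlinarith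
    · rw [infDist_smul_cone hScone hSne (by positivity : (0:ℝ) < ‖u‖⁻¹),
        real_inner_smul_right, hgu]
      have hi : 0 < ‖u‖⁻¹ := by positivity
      nlinarith [mul_lt_mul_of_pos_left hvbad hi, mul_le_mul_of_nonneg_left hdist hi.le]
  choose vseq hvT hvW hvnorm hvg hvbad using hbad
  have hsphere : ∀ j, vseq j ∈ Metric.sphere (0:E) 1 := fun j =>
    mem_sphere_zero_iff_norm.mpr (hvnorm j)
  obtain ⟨vstar, hvstar_mem, φ, hφ, hconv⟩ :=
    (isCompact_sphere (0:E) 1).tendsto_subseq hsphere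
  have hinner_lim : ∀ x : E,
      Tendsto (fun j => ⟪x, vseq (φ j)⟫) atTop (nhds ⟪x, vstar⟫) := fun x =>
    ((continuous_const.inner continuous_id).tendsto vstar).comp hconv
  have hvstarT : ∀ i, ⟪a i, vstar⟫ ≤ 0 := fun i =>
    le_of_tendsto (hinner_lim (a i)) (Eventually.of_forall fun j => hvT (φ j) i)
  have hvstarW : vstar ∈ W := by
    have hc : IsClosed (W : Set E) := Submodule.closed_of_finiteDimensional W
    exact hc.mem_of_tendsto hconv (Eventually.of_forall fun j => hvW (φ j))
  have hnorm1 : ‖vstar‖ = 1 := by rwa [mem_sphere_zero_iff_norm] at hvstar_mem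
  have hgstar : ⟪c₀, vstar⟫ = 0 := by
    have h1 : ⟪c₀, vstar⟫ ≤ 0 := hyp vstar hvstarT
    have hb : ∀ j : ℕ, -⟪c₀, vseq (φ j)⟫ ≤ 1/((j:ℝ)+1) := by
      intro j
      have h3 : infDist (vseq (φ j)) S ≤ 1 := by
        have := infDist_le_dist_of_mem (x := vseq (φ j)) hS0
        rwa [dist_zero_right, hvnorm (φ j)] at this
      have h4 := hvbad (φ j)
      have h5 : (j:ℝ)+1 ≤ (φ j : ℝ)+1 := by
        have := (hφ.le_apply : j ≤ φ j)
        have : (j:ℝ) ≤ (φ j : ℝ) := by exact_mod_cast this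
        linarith
      have h6 := hvg (φ j)
      have h7 : 0 < (j:ℝ)+1 := by positivity
      rw [le_div_iff₀ h7]
      nlinarith
    have h2 : -⟪c₀, vstar⟫ ≤ 0 := by
      refine le_of_tendsto_of_tendsto' ((hinner_lim c₀).neg)
        tendsto_one_div_add_atTop_nhds_zero_nat hb
    linarith
  by_cases hA : ∀ i, ⟪a i, vstar⟫ = 0
  · have hzero : ⟪vstar, vstar⟫ = (0:ℝ) := by
      have hall : ∀ x ∈ W, ⟪x, vstar⟫ = (0:ℝ) := by
        intro x hx
        rw [hWdef] at hx
        induction hx using Submodule.span_induction with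
        | mem x hx =>
          rcases hx with ⟨i, rfl⟩ | rfl
          · exact hA i
          · exact hgstar
        | zero => simp
        | add x y _ _ hx hy => rw [inner_add_left, hx, hy, add_zero]
        | smul r x _ hx => rw [real_inner_smul_left, hx, mul_zero]
      exact hall vstar hvstarW
    rw [real_inner_self_eq_norm_sq, hnorm1] at hzero
    norm_num at hzero
  · push_neg at hA
    obtain ⟨i₀, hi₀⟩ := hA
    set J : Finset (Fin k) := Finset.univ.filter (fun i => ⟪a i, vstar⟫ = 0) with hJdef
    have hmemJ : ∀ i, i ∈ J ↔ ⟪a i, vstar⟫ = 0 := fun i => by simp [hJdef]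
    have hi₀J : i₀ ∉ J := fun h => hi₀ ((hmemJ i₀).mp h)
    have hJcard : J.card < k := by
      have hsub : J ⊂ Finset.univ := Finset.ssubset_univ_iff.mpr (fun h => hi₀J (h ▸ Finset.mem_univ i₀))
      have := Finset.card_lt_card hsub
      simpa using this
    set e := J.orderIsoOfFin rfl with he
    set a' : Fin J.card → E := fun j => a (e j) with ha'
    have htrans : ∀ (x : E), (∀ j, ⟪a' j, x⟫ ≤ 0) ↔ (∀ i ∈ J, ⟪a i, x⟫ ≤ 0) := by
      intro x
      constructor
      · intro h i hi
        have h' := h (e.symm ⟨i, hi⟩)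
        rw [ha'] at h'
        simpa using h'
      · intro h j
        exact h (e j) (e j).2
    have hyp' : ∀ x : E, (∀ j, ⟪a' j, x⟫ ≤ 0) → ⟪c₀, x⟫ ≤ 0 := by
      intro x hx
      rw [htrans] at hx
      obtain ⟨t, ht, hstep⟩ := exists_pos_step (fun i => ⟪a i, vstar⟫) (fun i => ⟪a i, x⟫)
        hvstarT (fun i hi => hx i ((hmemJ i).mpr hi))
      have hmem : ∀ i, ⟪a i, vstar + t • x⟫ ≤ 0 := by
        intro i
        rw [inner_add_right, real_inner_smul_right]
        exact hstep i
      have hres := hyp _ hmem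
      rw [inner_add_right, real_inner_smul_right, hgstar, zero_add] at hres
      nlinarith
    obtain ⟨L', hL'pos, hL'⟩ := IH J.card hJcard a' c₀ hyp'
    set S' : Set E := {w : E | (∀ j, ⟪a' j, w⟫ ≤ 0) ∧ ⟪c₀, w⟫ = 0} with hS'def
    have hS'0 : (0:E) ∈ S' := ⟨fun i => by simp, by simp⟩
    set u : ℕ → E := fun j => vseq (φ j) - vstar with hudef
    have huS' : ∀ j i, ⟪a' i, u j⟫ ≤ 0 := by
      intro j i
      have h1 : ⟪a (e i), vstar⟫ = 0 := (hmemJ _).mp (e i).2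
      have h2 := hvT (φ j) (e i)
      rw [hudef, ha']
      simp only [inner_sub_right, h1]
      linarith
    have hw : ∀ j, ∃ y ∈ S', infDist (u j) S' = dist (u j) y := fun j =>
      (isClosed_coneSet a' c₀).exists_infDist_eq_dist ⟨0, hS'0⟩ (u j)
    choose w hwS' hwdist using hw
    have hwclose : ∀ j, dist (u j) (w j) ≤ L' * (-⟪c₀, vseq (φ j)⟫) := by
      intro j
      rw [← hwdist j]
      have h1 := hL' (u j) (huS' j)
      have hgu : ⟪c₀, u j⟫ = ⟪c₀, vseq (φ j)⟫ := by
        rw [hudef]; simp only [inner_sub_right, hgstar, sub_zero]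
      rwa [hgu] at h1
    have hJc_ne : i₀ ∈ Finset.univ.filter (fun i => i ∉ J) := by simp [hi₀J]
    set ρ : ℝ := (Finset.univ.filter (fun i => i ∉ J)).inf' ⟨i₀, hJc_ne⟩
      (fun i => (-⟪a i, vstar⟫) / (‖a i‖ + 1)) with hρdef
    have hρpos : 0 < ρ := by
      rw [hρdef]; refine (Finset.lt_inf'_iff _).mpr ?_
      intro i hi
      rw [Finset.mem_filter] at hi
      have hneg : ⟪a i, vstar⟫ < 0 :=
        lt_of_le_of_ne (hvstarT i) (fun h => hi.2 ((hmemJ i).mpr h))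
      exact div_pos (by linarith) (by positivity)
    have hnormw : ∀ j, ‖w j‖ ≤ ‖u j‖ + L' * (-⟪c₀, vseq (φ j)⟫) := by
      intro j
      have h1 := hwclose j
      have h2 : ‖w j‖ ≤ ‖u j‖ + dist (u j) (w j) := by
        rw [dist_eq_norm]
        calc ‖w j‖ = ‖u j - (u j - w j)‖ := by congr 1; abel
        _ ≤ ‖u j‖ + ‖u j - w j‖ := norm_sub_le _ _
      linarith
    have hu0 : Tendsto (fun j => ‖u j‖) atTop (nhds 0) := by
      have h1 : Tendsto u atTop (nhds 0) := by
        have := hconv.sub_const vstar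
        rwa [sub_self] at this
      simpa using h1.norm
    have hgtends : Tendsto (fun j => -⟪c₀, vseq (φ j)⟫) atTop (nhds 0) := by
      have := (hinner_lim c₀).neg
      rwa [hgstar, neg_zero] at this
    have hsum : Tendsto (fun j => ‖u j‖ + L' * (-⟪c₀, vseq (φ j)⟫)) atTop (nhds 0) := by
      have := hu0.add (hgtends.const_mul L')
      simpa using this
    have hev1 : ∀ᶠ j in atTop, ‖u j‖ + L' * (-⟪c₀, vseq (φ j)⟫) < ρ :=
      hsum.eventually (gt_mem_nhds hρpos)
    have hev2 : ∀ᶠ j in atTop, L' < (φ j : ℝ) + 1 := by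
      rw [eventually_atTop]
      refine ⟨⌈L'⌉₊, fun j hj => ?_⟩
      have h1 : L' ≤ (⌈L'⌉₊ : ℝ) := Nat.le_ceil L'
      have h2 : (⌈L'⌉₊ : ℝ) ≤ (j:ℝ) := by exact_mod_cast hj
      have h3 : (j:ℝ) ≤ (φ j : ℝ) := by exact_mod_cast (hφ.le_apply : j ≤ φ j)
      linarith
    obtain ⟨K, hK1, hK2⟩ := (hev1.and hev2).exists
    have hWmem : vstar + w K ∈ S := by
      refine ⟨fun i => ?_, ?_⟩
      · by_cases hi : i ∈ J
        · have h1 : ⟪a i, vstar⟫ = 0 := (hmemJ i).mp hi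
          have h2 := ((htrans (w K)).mp (hwS' K).1) i hi
          rw [inner_add_right, h1, zero_add]
          exact h2
        · have hneg : ⟪a i, vstar⟫ < 0 :=
            lt_of_le_of_ne (hvstarT i) (fun h => hi ((hmemJ i).mpr h))
          have hb : ρ ≤ (-⟪a i, vstar⟫)/(‖a i‖+1) := by
            rw [hρdef]
            exact Finset.inf'_le _ (by simp [hi])
          have hwsmall : ‖w K‖ < ρ := by
            have := hnormw K
            linarith
          have habs : |⟪a i, w K⟫| ≤ ‖a i‖ * ‖w K‖ := abs_real_inner_le_norm _ _
          have hb2 : ρ * (‖a i‖ + 1) ≤ -⟪a i, vstar⟫ := by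
            rw [← le_div_iff₀ (by positivity : (0:ℝ) < ‖a i‖ + 1)]
            exact hb
          rw [inner_add_right]
          have h3 : ⟪a i, w K⟫ ≤ ‖a i‖ * ‖w K‖ := (abs_le.mp habs).2
          nlinarith [norm_nonneg (a i), norm_nonneg (w K)]
      · rw [inner_add_right, hgstar, (hwS' K).2, add_zero]
    have hfinal : infDist (vseq (φ K)) S ≤ L' * (-⟪c₀, vseq (φ K)⟫) := by
      calc infDist (vseq (φ K)) S ≤ dist (vseq (φ K)) (vstar + w K) :=
            infDist_le_dist_of_mem hWmem
      _ = dist (u K) (w K) := by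
            rw [dist_eq_norm, dist_eq_norm, ← sub_sub]
      _ ≤ L' * (-⟪c₀, vseq (φ K)⟫) := hwclose K
    have hlast := hvbad (φ K)
    have hgK := hvg (φ K)
    nlinarith

end CoreLemma

section MainHelpers

variable {E : Type*} [NormedAddCommGroup E] [InnerProductSpace ℝ E]

lemma isClosed_coneSet₂ {ι : Type*} (s : Finset ι) (a : ι → E) (c₀ : E) :
    IsClosed {w : E | (∀ i ∈ s, ⟪a i, w⟫ ≤ 0) ∧ ⟪c₀, w⟫ = 0} := by
  rw [Set.setOf_and]
  refine IsClosed.inter ?_ (isClosed_eq (continuous_const.inner continuous_id) continuous_const)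
  have h : {w : E | ∀ i ∈ s, ⟪a i, w⟫ ≤ 0} = ⋂ i ∈ s, {w : E | ⟪a i, w⟫ ≤ 0} := by
    ext w; simp
  rw [h]
  exact isClosed_biInter fun i _ =>
    isClosed_le (continuous_const.inner continuous_id) continuous_const

end MainHelpers

set_option maxHeartbeats 2000000 in
/-- Sticky face lemma: if `F` is the (nonempty) set of maximizers of `c₀·x` on
a polyhedron `P`, then for all `c` close enough to `c₀`, the maximizers of
`c·x` on `P` are exactly the maximizers of `c·x` on `F`. -/
theorem sticky_face (n m : ℕ) (A : Fin m → EuclideanSpace ℝ (Fin n))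
    (b : Fin m → ℝ) (P : Set (EuclideanSpace ℝ (Fin n)))
    (hP : P = {x | ∀ i, ⟪A i, x⟫ ≤ b i})
    (c0 : EuclideanSpace ℝ (Fin n)) (F : Set (EuclideanSpace ℝ (Fin n)))
    (hF : F = {x ∈ P | ∀ y ∈ P, ⟪c0, y⟫ ≤ ⟪c0, x⟫})
    (hFne : F.Nonempty) :
    ∃ ε > (0 : ℝ), ∀ c : EuclideanSpace ℝ (Fin n), ‖c - c0‖ < ε →
      {x ∈ P | ∀ y ∈ P, ⟪c, y⟫ ≤ ⟪c, x⟫}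
        = {x ∈ F | ∀ y ∈ F, ⟪c, y⟫ ≤ ⟪c, x⟫} := by
  classical
  have hPmem : ∀ x, x ∈ P ↔ ∀ i, ⟪A i, x⟫ ≤ b i := fun x => by rw [hP]; rfl
  have hFmem : ∀ x, x ∈ F ↔ x ∈ P ∧ ∀ y ∈ P, ⟪c0, y⟫ ≤ ⟪c0, x⟫ := fun x => by rw [hF]; rfl
  -- step lemmas
  have hstep : ∀ x ∈ P, ∀ w : EuclideanSpace ℝ (Fin n),
      (∀ i, ⟪A i, x⟫ = b i → ⟪A i, w⟫ ≤ 0) → ∃ t > (0:ℝ), x + t • w ∈ P := by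
    intro x hx w hw
    have hα : ∀ i, ⟪A i, x⟫ - b i ≤ 0 := fun i => by
      have := (hPmem x).mp hx i; linarith
    have hβ : ∀ i, ⟪A i, x⟫ - b i = 0 → ⟪A i, w⟫ ≤ 0 := fun i hi => hw i (by linarith)
    obtain ⟨t, ht, hst⟩ := exists_pos_step (fun i => ⟪A i, x⟫ - b i) (fun i => ⟪A i, w⟫) hα hβ
    refine ⟨t, ht, (hPmem _).mpr fun i => ?_⟩
    have h2 : ⟪A i, x⟫ - b i + t * ⟪A i, w⟫ ≤ 0 := hst i
    rw [inner_add_right, real_inner_smul_right]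
    linarith
  have hstepF : ∀ x ∈ F, ∀ w : EuclideanSpace ℝ (Fin n),
      (∀ i, ⟪A i, x⟫ = b i → ⟪A i, w⟫ ≤ 0) → ⟪c0, w⟫ = 0 →
      ∃ t > (0:ℝ), x + t • w ∈ F := by
    intro x hxF w hw hcw
    obtain ⟨hxP, hxmax⟩ := (hFmem x).mp hxF
    obtain ⟨t, ht, htP⟩ := hstep x hxP w hw
    refine ⟨t, ht, (hFmem _).mpr ⟨htP, fun y hy => ?_⟩⟩
    have := hxmax y hy
    rw [inner_add_right, real_inner_smul_right, hcw, mul_zero, add_zero]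
    exact this
  have hgood : ∀ x ∈ F, ∀ v : EuclideanSpace ℝ (Fin n),
      (∀ i, ⟪A i, x⟫ = b i → ⟪A i, v⟫ ≤ 0) → ⟪c0, v⟫ ≤ 0 := by
    intro x hxF v hv
    obtain ⟨hxP, hxmax⟩ := (hFmem x).mp hxF
    obtain ⟨t, ht, htP⟩ := hstep x hxP v hv
    have := hxmax _ htP
    rw [inner_add_right, real_inner_smul_right] at this
    nlinarith
  -- instantiated Hoffman bound for subsets of constraints
  have hcoreJ : ∀ J : Finset (Fin m), (∀ v, (∀ i ∈ J, ⟪A i, v⟫ ≤ 0) → ⟪c0, v⟫ ≤ 0) →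
      ∃ L > (0:ℝ), ∀ v, (∀ i ∈ J, ⟪A i, v⟫ ≤ 0) →
        Metric.infDist v {w | (∀ i ∈ J, ⟪A i, w⟫ ≤ 0) ∧ ⟪c0, w⟫ = 0} ≤ L * (-⟪c0, v⟫) := by
    intro J hJ
    set e := J.orderIsoOfFin rfl with he
    have htrans : ∀ x : EuclideanSpace ℝ (Fin n),
        (∀ j : Fin J.card, ⟪A (e j), x⟫ ≤ 0) ↔ (∀ i ∈ J, ⟪A i, x⟫ ≤ 0) := by
      intro x
      constructor
      · intro h i hi
        have h' := h (e.symm ⟨i, hi⟩)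
        simpa [he] using h'
      · intro h j; exact h (e j) (e j).2
    obtain ⟨L, hLpos, hL⟩ := hoffman_core J.card (fun j => A (e j)) c0
      (fun v hv => hJ v ((htrans v).mp hv))
    refine ⟨L, hLpos, fun v hv => ?_⟩
    have hres := hL v ((htrans v).mpr hv)
    have hsets : {w : EuclideanSpace ℝ (Fin n) |
        (∀ j : Fin J.card, ⟪A (e j), w⟫ ≤ 0) ∧ ⟪c0, w⟫ = 0}
        = {w | (∀ i ∈ J, ⟪A i, w⟫ ≤ 0) ∧ ⟪c0, w⟫ = 0} := by
      ext w
      rw [Set.mem_setOf_eq, Set.mem_setOf_eq, htrans w]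
    rwa [hsets] at hres
  -- choose constants
  have hLex : ∃ L : Finset (Fin m) → ℝ, ∀ J, 0 < L J ∧
      ((∀ v, (∀ i ∈ J, ⟪A i, v⟫ ≤ 0) → ⟪c0, v⟫ ≤ 0) →
      ∀ v, (∀ i ∈ J, ⟪A i, v⟫ ≤ 0) →
        Metric.infDist v {w | (∀ i ∈ J, ⟪A i, w⟫ ≤ 0) ∧ ⟪c0, w⟫ = 0} ≤ L J * (-⟪c0, v⟫)) := by
    refine ⟨fun J => if h : (∀ v, (∀ i ∈ J, ⟪A i, v⟫ ≤ 0) → ⟪c0, v⟫ ≤ 0)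
      then (hcoreJ J h).choose else 1, fun J => ?_⟩
    rcases Classical.em (∀ v, (∀ i ∈ J, ⟪A i, v⟫ ≤ 0) → ⟪c0, v⟫ ≤ 0) with h | h
    · simp only [dif_pos h]
      exact ⟨(hcoreJ J h).choose_spec.1, fun _ => (hcoreJ J h).choose_spec.2⟩
    · simp only [dif_neg h]
      exact ⟨one_pos, fun h' => absurd h' h⟩
  obtain ⟨L, hL⟩ := hLex
  set Lm : ℝ := Finset.univ.sup' Finset.univ_nonempty L with hLm
  have hLle : ∀ J, L J ≤ Lm := fun J => Finset.le_sup' L (Finset.mem_univ J)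
  have hLmpos : 0 < Lm := lt_of_lt_of_le (hL ∅).1 (hLle ∅)
  -- closedness and convexity of F
  have hPclosed : IsClosed P := by
    rw [hP]
    have h : {x : EuclideanSpace ℝ (Fin n) | ∀ i, ⟪A i, x⟫ ≤ b i}
        = ⋂ i, {x | ⟪A i, x⟫ ≤ b i} := by ext; simp
    rw [h]
    exact isClosed_iInter fun i =>
      isClosed_le (continuous_const.inner continuous_id) continuous_const
  have hFclosed : IsClosed F := by
    rw [hF]
    have h : {x ∈ P | ∀ y ∈ P, ⟪c0, y⟫ ≤ ⟪c0, x⟫}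
        = P ∩ ⋂ y ∈ P, {x | ⟪c0, y⟫ ≤ ⟪c0, x⟫} := by
      ext x; simp [Set.mem_sep_iff]
    rw [h]
    exact hPclosed.inter (isClosed_biInter fun y _ =>
      isClosed_le continuous_const (continuous_const.inner continuous_id))
  have hFconvex : Convex ℝ F := by
    rw [hF]
    intro p hp q hq α β hα hβ hαβ
    obtain ⟨hpP, hpmax⟩ := hp
    obtain ⟨hqP, hqmax⟩ := hq
    have hPc : α • p + β • q ∈ P := by
      rw [hPmem]
      intro i
      have h1 := (hPmem p).mp hpP i
      have h2 := (hPmem q).mp hqP i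
      rw [inner_add_right, real_inner_smul_right, real_inner_smul_right]
      have hb : α * b i + β * b i = b i := by rw [← add_mul, hαβ, one_mul]
      linarith [mul_le_mul_of_nonneg_left h1 hα, mul_le_mul_of_nonneg_left h2 hβ]
    refine ⟨hPc, fun y hy => ?_⟩
    have h1 := hpmax y hy
    have h2 := hqmax y hy
    rw [inner_add_right, real_inner_smul_right, real_inner_smul_right]
    have hb : α * ⟪c0, y⟫ + β * ⟪c0, y⟫ = ⟪c0, y⟫ := by rw [← add_mul, hαβ, one_mul]
    linarith [mul_le_mul_of_nonneg_left h1 hα, mul_le_mul_of_nonneg_left h2 hβ]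
  -- the epsilon
  refine ⟨(Lm + 1)⁻¹, by positivity, ?_⟩
  intro c hc
  set d : EuclideanSpace ℝ (Fin n) := c - c0 with hd
  have hcd : c = c0 + d := by rw [hd]; abel
  have hdL : ∀ J, ‖d‖ * L J < 1 := by
    intro J
    have h1 : ‖d‖ * (Lm + 1) < 1 := by
      have h2 := mul_lt_mul_of_pos_right hc (by positivity : (0:ℝ) < Lm + 1)
      rw [inv_mul_cancel₀ (by positivity : (Lm:ℝ) + 1 ≠ 0)] at h2
      exact h2
    nlinarith [norm_nonneg d, hLle J, (hL J).1]
  ext x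
  simp only [Set.mem_sep_iff]
  constructor
  · -- maximizer of c on P lies in F and is a maximizer on F
    rintro ⟨hxP, hxmax⟩
    -- projection of x onto F
    obtain ⟨y, hyF, hprojy⟩ := exists_norm_eq_iInf_of_complete_convex hFne
      hFclosed.isComplete hFconvex x
    have hvar : ∀ z ∈ F, ⟪x - y, z - y⟫ ≤ 0 :=
      (norm_eq_iInf_iff_real_inner_le_zero hFconvex hyF).mp hprojy
    obtain ⟨hyP, hymax⟩ := (hFmem y).mp hyF
    set Jy : Finset (Fin m) := Finset.univ.filter (fun i => ⟪A i, y⟫ = b i) with hJy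
    have hmemJy : ∀ i, i ∈ Jy ↔ ⟪A i, y⟫ = b i := fun i => by simp [hJy]
    have hgoodJy : ∀ v, (∀ i ∈ Jy, ⟪A i, v⟫ ≤ 0) → ⟪c0, v⟫ ≤ 0 :=
      fun v hv => hgood y hyF v (fun i hi => hv i ((hmemJy i).mpr hi))
    set v : EuclideanSpace ℝ (Fin n) := x - y with hv
    have hvT : ∀ i ∈ Jy, ⟪A i, v⟫ ≤ 0 := by
      intro i hi
      rw [hv, inner_sub_right, (hmemJy i).mp hi]
      have := (hPmem x).mp hxP i
      linarith
    have hbound := (hL Jy).2 hgoodJy v hvT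
    obtain ⟨w, hwS, hwdist⟩ := (isClosed_coneSet₂ Jy A c0).exists_infDist_eq_dist
      ⟨0, ⟨fun i _ => by simp, by simp⟩⟩ v
    have hvw : ⟪v, w⟫ ≤ 0 := by
      obtain ⟨t, ht, htF⟩ := hstepF y hyF w
        (fun i hi => hwS.1 i ((hmemJy i).mpr hi)) hwS.2
      have h1 := hvar _ htF
      rw [add_sub_cancel_left, real_inner_smul_right] at h1
      nlinarith
    have hs : (0:ℝ) ≤ -⟪c0, v⟫ := by have := hgoodJy v hvT; linarith
    have hdistle : ‖v - w‖ ≤ L Jy * (-⟪c0, v⟫) := by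
      rw [← dist_eq_norm, ← hwdist]; exact hbound
    have hnv : ‖v‖ ≤ L Jy * (-⟪c0, v⟫) := by
      have h1 : ‖v‖^2 ≤ ‖v‖ * ‖v - w‖ := by
        have h2 : ⟪v, v - w⟫ ≤ ‖v‖ * ‖v - w‖ := real_inner_le_norm _ _
        have h3 : ‖v‖^2 = ⟪v, v - w⟫ + ⟪v, w⟫ := by
          rw [inner_sub_right, ← real_inner_self_eq_norm_sq]; ring
        nlinarith
      rcases eq_or_lt_of_le (norm_nonneg v) with h0 | h0
      · rw [← h0]; nlinarith [(hL Jy).1]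
      · have h4 : ‖v‖ ≤ ‖v - w‖ := by nlinarith
        linarith
    -- conclude s = 0
    have hs0 : -⟪c0, v⟫ = 0 := by
      have h1 : (0:ℝ) ≤ ⟪c, v⟫ := by
        have := hxmax y hyP
        rw [hv, inner_sub_right]
        linarith
      have h2 : ⟪c, v⟫ = ⟪c0, v⟫ + ⟪d, v⟫ := by
        rw [hcd, inner_add_left]
      have h3 : ⟪d, v⟫ ≤ ‖d‖ * ‖v‖ := real_inner_le_norm _ _
      have h4 := hdL Jy
      have h5 : ‖d‖ * ‖v‖ ≤ ‖d‖ * (L Jy * (-⟪c0, v⟫)) :=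
        mul_le_mul_of_nonneg_left hnv (norm_nonneg d)
      have h6 : -⟪c0, v⟫ ≤ 0 := by nlinarith
      linarith
    have hxF : x ∈ F := by
      refine (hFmem x).mpr ⟨hxP, fun z hz => ?_⟩
      have h1 := hymax z hz
      have h2 : ⟪c0, x⟫ = ⟪c0, y⟫ := by
        have : ⟪c0, v⟫ = 0 := by linarith
        rw [hv, inner_sub_right] at this
        linarith
      linarith
    exact ⟨hxF, fun z hzF => hxmax z ((hFmem z).mp hzF).1⟩
  · -- maximizer of c on F is a maximizer on P
    rintro ⟨hxF, hxmaxF⟩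
    obtain ⟨hxP, hxmax0⟩ := (hFmem x).mp hxF
    refine ⟨hxP, fun y hy => ?_⟩
    set Jx : Finset (Fin m) := Finset.univ.filter (fun i => ⟪A i, x⟫ = b i) with hJx
    have hmemJx : ∀ i, i ∈ Jx ↔ ⟪A i, x⟫ = b i := fun i => by simp [hJx]
    have hgoodJx : ∀ v, (∀ i ∈ Jx, ⟪A i, v⟫ ≤ 0) → ⟪c0, v⟫ ≤ 0 :=
      fun v hv => hgood x hxF v (fun i hi => hv i ((hmemJx i).mpr hi))
    set v : EuclideanSpace ℝ (Fin n) := y - x with hv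
    have hvT : ∀ i ∈ Jx, ⟪A i, v⟫ ≤ 0 := by
      intro i hi
      rw [hv, inner_sub_right, (hmemJx i).mp hi]
      have := (hPmem y).mp hy i
      linarith
    have hbound := (hL Jx).2 hgoodJx v hvT
    obtain ⟨w, hwS, hwdist⟩ := (isClosed_coneSet₂ Jx A c0).exists_infDist_eq_dist
      ⟨0, ⟨fun i _ => by simp, by simp⟩⟩ v
    have hcw : ⟪c, w⟫ ≤ 0 := by
      obtain ⟨t, ht, htF⟩ := hstepF x hxF w
        (fun i hi => hwS.1 i ((hmemJx i).mpr hi)) hwS.2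
      have h1 := hxmaxF _ htF
      rw [inner_add_right, real_inner_smul_right] at h1
      nlinarith
    have hs : (0:ℝ) ≤ -⟪c0, v⟫ := by have := hgoodJx v hvT; linarith
    have hdistle : ‖v - w‖ ≤ L Jx * (-⟪c0, v⟫) := by
      rw [← dist_eq_norm, ← hwdist]; exact hbound
    have hcv : ⟪c, v⟫ ≤ 0 := by
      have hsplit : ⟪c, v⟫ = ⟪c, w⟫ + ⟪c0, v - w⟫ + ⟪d, v - w⟫ := by
        rw [hcd]
        simp only [inner_add_left, inner_sub_right]
        ring
      have hc0vw : ⟪c0, v - w⟫ = ⟪c0, v⟫ := by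
        rw [inner_sub_right, hwS.2, sub_zero]
      have h3 : ⟪d, v - w⟫ ≤ ‖d‖ * ‖v - w‖ := real_inner_le_norm _ _
      have h4 := hdL Jx
      have h5 : ‖d‖ * ‖v - w‖ ≤ ‖d‖ * (L Jx * (-⟪c0, v⟫)) :=
        mul_le_mul_of_nonneg_left hdistle (norm_nonneg d)
      have h6 : (0:ℝ) ≤ (-⟪c0, v⟫) * (1 - ‖d‖ * L Jx) :=
        mul_nonneg hs (by linarith)
      nlinarith
    rw [hv, inner_sub_right] at hcv
    linarith
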